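/- Under the stated assumptions, for every integer p ≥ 2 and every y ∈ ℤ₊^D (writing x := lᵀy ≥ 0 and δ := max_{1 ≤ r ≤ R} |lᵀN_r|): ∑_{r=1}^{R} w_r(y)·[ (lᵀ(y − N_r))^p − (lᵀy)^p ] ≤ p·(A + α·x)·x^(p−1) + 2^(p−3)·p·(p−1)·(B + β₁·x + β₂·x²)·( x^(p−2) + δ^(p−2) ). -/

import Mathlib

open Finset

private lemma chebyshev_aux (a b : ℝ) (ha : 0 ≤ a) (hb : 0 ≤ b) (n : ℕ) :
    (a ^ n + b ^ n) * (a + b) ≤ 2 * (a ^ (n+1) + b ^ (n+1)) := by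
  have h : 0 ≤ (a - b) * (a ^ n - b ^ n) := by
    rcases le_total a b with h | h
    · have hpow : a ^ n ≤ b ^ n := pow_le_pow_left₀ ha h n
      nlinarith
    · have hpow : b ^ n ≤ a ^ n := pow_le_pow_left₀ hb h n
      nlinarith
  nlinarith [pow_succ a n, pow_succ b n]

private lemma two_pow_bound (a b : ℝ) (ha : 0 ≤ a) (hb : 0 ≤ b) (n : ℕ) :
    (a + b) ^ n ≤ (2:ℝ) ^ ((n:ℤ) - 1) * (a ^ n + b ^ n) := by
  induction n with
  | zero => norm_num
  | succ n ih =>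
    have h2 : (2:ℝ) ^ (((n:ℤ)+1) - 1) = (2:ℝ) ^ ((n:ℤ) - 1) * 2 := by
      rw [← zpow_add_one₀ (by norm_num : (2:ℝ) ≠ 0)]; ring_nf
    have hab : 0 ≤ a + b := by linarith
    calc (a + b) ^ (n+1) = (a + b) ^ n * (a + b) := by ring
      _ ≤ ((2:ℝ) ^ ((n:ℤ) - 1) * (a ^ n + b ^ n)) * (a + b) :=
          mul_le_mul_of_nonneg_right ih hab
      _ = (2:ℝ) ^ ((n:ℤ) - 1) * ((a ^ n + b ^ n) * (a + b)) := by ring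
      _ ≤ (2:ℝ) ^ ((n:ℤ) - 1) * (2 * (a ^ (n+1) + b ^ (n+1))) := by
          exact mul_le_mul_of_nonneg_left (chebyshev_aux a b ha hb n)
            (le_of_lt (zpow_pos (by norm_num) _))
      _ = (2:ℝ) ^ (((n:ℤ)+1) - 1) * (a ^ (n+1) + b ^ (n+1)) := by rw [h2]; ring
  
private lemma key_identity (a b : ℝ) (n : ℕ) :
    b ^ (n+2) - a ^ (n+2) - ((n:ℝ)+2) * a ^ (n+1) * (b - a)
      = (b - a) ^ 2 * ∑ i ∈ Finset.range (n+1), ((i:ℝ)+1) * a ^ i * b ^ (n - i) := by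
  induction n with
  | zero => simp; ring
  | succ n ih =>
    have hs : ∑ i ∈ Finset.range (n+2), ((i:ℝ)+1) * a ^ i * b ^ (n + 1 - i)
        = b * (∑ i ∈ Finset.range (n+1), ((i:ℝ)+1) * a ^ i * b ^ (n - i))
          + ((n:ℝ)+2) * a ^ (n+1) := by
      rw [Finset.sum_range_succ]
      have hc : ∀ i ∈ Finset.range (n+1), ((i:ℝ)+1) * a ^ i * b ^ (n + 1 - i)
          = b * (((i:ℝ)+1) * a ^ i * b ^ (n - i)) := by
        intro i hi
        have hi' : i ≤ n := by simpa [Nat.lt_succ_iff] using hi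
        rw [show n + 1 - i = (n - i) + 1 by omega, pow_succ]
        ring
      rw [Finset.sum_congr rfl hc, ← Finset.mul_sum, Nat.sub_self, pow_zero]
      push_cast; ring
    rw [hs]
    have key : b ^ (n+3) - a ^ (n+3) - ((n:ℝ)+3) * a ^ (n+2) * (b - a)
        = b * (b ^ (n+2) - a ^ (n+2) - ((n:ℝ)+2) * a ^ (n+1) * (b - a))
          + ((n:ℝ)+2) * a ^ (n+1) * (b - a) ^ 2 := by ring
    push_cast
    push_cast at ih
    rw [show (n:ℝ)+1+2 = (n:ℝ)+3 by ring, show n+1+2 = n+3 from rfl,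
      show n+1+1 = n+2 from rfl, key, ih]
    ring

private lemma gauss_sum (n : ℕ) :
    ∑ i ∈ Finset.range (n+1), ((i:ℝ)+1) = ((n:ℝ)+1) * ((n:ℝ)+2) / 2 := by
  induction n with
  | zero => norm_num
  | succ n ih => rw [Finset.sum_range_succ, ih]; push_cast; ring

private lemma taylor_bound (x ν : ℝ) (hx : 0 ≤ x) (n : ℕ) :
    (x - ν) ^ (n+2) - x ^ (n+2) ≤
      -((n:ℝ)+2) * ν * x ^ (n+1)
        + ((n:ℝ)+2) * ((n:ℝ)+1) / 2 * ν ^ 2 * (x + |ν|) ^ n := by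
  have hid := key_identity x (x - ν) n
  set S := ∑ i ∈ Finset.range (n+1), ((i:ℝ)+1) * x ^ i * (x - ν) ^ (n - i) with hS
  have hM : 0 ≤ x + |ν| := by positivity
  have hSb : |S| ≤ ((n:ℝ)+1) * ((n:ℝ)+2) / 2 * (x + |ν|) ^ n := by
    calc |S| ≤ ∑ i ∈ Finset.range (n+1), |((i:ℝ)+1) * x ^ i * (x - ν) ^ (n - i)| :=
          Finset.abs_sum_le_sum_abs _ _
      _ ≤ ∑ i ∈ Finset.range (n+1), ((i:ℝ)+1) * (x + |ν|) ^ n := by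
          apply Finset.sum_le_sum
          intro i hi
          have hi' : i ≤ n := by simpa [Nat.lt_succ_iff] using hi
          rw [abs_mul, abs_mul]
          have h1 : |x ^ i| ≤ (x + |ν|) ^ i := by
            rw [abs_pow]
            exact pow_le_pow_left₀ (abs_nonneg _)
              (by rw [abs_of_nonneg hx]; linarith [abs_nonneg ν]) i
          have h2 : |(x - ν) ^ (n - i)| ≤ (x + |ν|) ^ (n - i) := by
            rw [abs_pow]
            refine pow_le_pow_left₀ (abs_nonneg _) ?_ _
            calc |x - ν| ≤ |x| + |ν| := abs_sub _ _
              _ = x + |ν| := by rw [abs_of_nonneg hx]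
          have h3 : |((i:ℝ)+1)| = (i:ℝ)+1 := abs_of_nonneg (by positivity)
          calc |((i:ℝ)+1)| * |x ^ i| * |(x - ν) ^ (n - i)|
              ≤ ((i:ℝ)+1) * (x + |ν|) ^ i * (x + |ν|) ^ (n - i) := by
                rw [h3]
                exact mul_le_mul (mul_le_mul_of_nonneg_left h1 (by positivity)) h2
                  (abs_nonneg _) (by positivity)
            _ = ((i:ℝ)+1) * (x + |ν|) ^ (i + (n - i)) := by rw [pow_add]; ring
            _ = ((i:ℝ)+1) * (x + |ν|) ^ n := by rw [show i + (n-i) = n by omega]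
      _ = (((n:ℝ)+1) * ((n:ℝ)+2) / 2) * (x + |ν|) ^ n := by
          rw [← Finset.sum_mul, gauss_sum]
  have hν2S : ν ^ 2 * S ≤ ν ^ 2 * (((n:ℝ)+1) * ((n:ℝ)+2) / 2 * (x + |ν|) ^ n) :=
    mul_le_mul_of_nonneg_left (le_trans (le_abs_self S) hSb) (sq_nonneg ν)
  nlinarith [hid, hν2S]

/-- Under the drift and diffusion bounds (i) and (ii) for the
reaction network `[N, w]` with positive weight vector `l`, for every integer `p ≥ 2`
and every state `y ∈ ℤ₊^D`, writing `x := lᵀy` and `δ := max_r |lᵀN_r|`,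
`∑_r w_r(y)·[(lᵀ(y − N_r))^p − (lᵀy)^p]
  ≤ p·(A + α·x)·x^(p−1) + 2^(p−3)·p·(p−1)·(B + β₁·x + β₂·x²)·(x^(p−2) + δ^(p−2))`. -/
theorem generator_pow_bound (D R : ℕ) (hD : 1 ≤ D) (hR : 1 ≤ R)
    (Nm : Matrix (Fin D) (Fin R) ℤ) (l : Fin D → ℝ) (hl : ∀ i, 0 < l i)
    (w : Fin R → (Fin D → ℕ) → ℝ) (hw : ∀ r y, 0 ≤ w r y)
    (A α B β₁ β₂ : ℝ) (hB : 0 ≤ B) (hβ₁ : 0 ≤ β₁) (hβ₂ : 0 ≤ β₂)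
    (h1 : ∀ y : Fin D → ℕ,
      -(∑ r, (∑ i, l i * (Nm i r : ℝ)) * w r y) ≤ A + α * ∑ i, l i * (y i : ℝ))
    (h2 : ∀ y : Fin D → ℕ,
      (1 / 2 : ℝ) * ∑ r, (∑ i, l i * (Nm i r : ℝ)) ^ 2 * w r y ≤
        B + β₁ * (∑ i, l i * (y i : ℝ)) + β₂ * (∑ i, l i * (y i : ℝ)) ^ 2)
    (p : ℕ) (hp : 2 ≤ p) (y : Fin D → ℕ) :
    ∑ r, w r y *
        ((∑ i, l i * ((y i : ℝ) - (Nm i r : ℝ))) ^ p - (∑ i, l i * (y i : ℝ)) ^ p) ≤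
      (p : ℝ) * (A + α * ∑ i, l i * (y i : ℝ)) * (∑ i, l i * (y i : ℝ)) ^ (p - 1) +
        (2 : ℝ) ^ ((p : ℤ) - 3) * (p : ℝ) * ((p : ℝ) - 1) *
          (B + β₁ * (∑ i, l i * (y i : ℝ)) + β₂ * (∑ i, l i * (y i : ℝ)) ^ 2) *
          ((∑ i, l i * (y i : ℝ)) ^ (p - 2) +
            (⨆ r : Fin R, |∑ i, l i * (Nm i r : ℝ)|) ^ (p - 2)) := by
  obtain ⟨n, rfl⟩ : ∃ n, p = n + 2 := ⟨p - 2, by omega⟩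
  haveI : Nonempty (Fin R) := ⟨⟨0, hR⟩⟩
  set x : ℝ := ∑ i, l i * (y i : ℝ) with hxdef
  set ν : Fin R → ℝ := fun r => ∑ i, l i * (Nm i r : ℝ) with hνdef
  have hx : 0 ≤ x := Finset.sum_nonneg fun i _ => mul_nonneg (hl i).le (Nat.cast_nonneg _)
  set δ : ℝ := ⨆ r : Fin R, |ν r| with hδdef
  have hδle : ∀ r, |ν r| ≤ δ := fun r =>
    le_ciSup (f := fun r => |ν r|) (Set.Finite.bddAbove (Set.finite_range _)) r
  have hδ0 : 0 ≤ δ := le_trans (abs_nonneg _) (hδle ⟨0, hR⟩)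
  have hsub : ∀ r, (∑ i, l i * ((y i : ℝ) - (Nm i r : ℝ))) = x - ν r := by
    intro r
    simp only [mul_sub, hxdef, hνdef]
    rw [Finset.sum_sub_distrib]
  set Q : ℝ := B + β₁ * x + β₂ * x ^ 2 with hQdef
  set K : ℝ := (2:ℝ) ^ ((n:ℤ) - 1) * ((n:ℝ)+2) * ((n:ℝ)+1) * (x ^ n + δ ^ n) with hKdef
  have hpow2 : (0:ℝ) < (2:ℝ) ^ ((n:ℤ) - 1) := zpow_pos (by norm_num) _
  have hK0 : 0 ≤ K := by
    apply mul_nonneg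
    apply mul_nonneg
    apply mul_nonneg hpow2.le
    all_goals positivity
  have hmid : ∀ r, ((n:ℝ)+2) * ((n:ℝ)+1) / 2 * (x + |ν r|) ^ n ≤ K / 2 := by
    intro r
    have ha : (x + |ν r|) ^ n ≤ (x + δ) ^ n :=
      pow_le_pow_left₀ (by positivity) (by linarith [hδle r]) n
    have hb : (x + δ) ^ n ≤ (2:ℝ) ^ ((n:ℤ) - 1) * (x ^ n + δ ^ n) :=
      two_pow_bound x δ hx hδ0 n
    have := mul_le_mul_of_nonneg_left (ha.trans hb) (by positivity : (0:ℝ) ≤ ((n:ℝ)+2) * ((n:ℝ)+1) / 2)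
    calc ((n:ℝ)+2) * ((n:ℝ)+1) / 2 * (x + |ν r|) ^ n
        ≤ ((n:ℝ)+2) * ((n:ℝ)+1) / 2 * ((2:ℝ) ^ ((n:ℤ) - 1) * (x ^ n + δ ^ n)) := this
      _ = K / 2 := by rw [hKdef]; ring
  have hterm : ∀ r : Fin R, w r y * ((x - ν r) ^ (n+2) - x ^ (n+2)) ≤
      ((n:ℝ)+2) * x ^ (n+1) * (-(ν r * w r y)) + (ν r ^ 2 * w r y) * (K / 2) := by
    intro r
    calc w r y * ((x - ν r) ^ (n+2) - x ^ (n+2))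
        ≤ w r y * (-((n:ℝ)+2) * ν r * x ^ (n+1)
            + ((n:ℝ)+2) * ((n:ℝ)+1) / 2 * ν r ^ 2 * (x + |ν r|) ^ n) :=
          mul_le_mul_of_nonneg_left (taylor_bound x (ν r) hx n) (hw r y)
      _ = ((n:ℝ)+2) * x ^ (n+1) * (-(ν r * w r y))
            + (ν r ^ 2 * w r y) * (((n:ℝ)+2) * ((n:ℝ)+1) / 2 * (x + |ν r|) ^ n) := by ring
      _ ≤ ((n:ℝ)+2) * x ^ (n+1) * (-(ν r * w r y)) + (ν r ^ 2 * w r y) * (K / 2) := by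
          apply add_le_add le_rfl
          exact mul_le_mul_of_nonneg_left (hmid r)
            (mul_nonneg (sq_nonneg _) (hw r y))
  have hsum : ∑ r, w r y * ((x - ν r) ^ (n+2) - x ^ (n+2)) ≤
      ((n:ℝ)+2) * x ^ (n+1) * (-(∑ r, ν r * w r y)) + (∑ r, ν r ^ 2 * w r y) * (K / 2) := by
    calc ∑ r, w r y * ((x - ν r) ^ (n+2) - x ^ (n+2))
        ≤ ∑ r, (((n:ℝ)+2) * x ^ (n+1) * (-(ν r * w r y)) + (ν r ^ 2 * w r y) * (K / 2)) :=
          Finset.sum_le_sum fun r _ => hterm r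
      _ = ((n:ℝ)+2) * x ^ (n+1) * (-(∑ r, ν r * w r y)) + (∑ r, ν r ^ 2 * w r y) * (K / 2) := by
          rw [Finset.sum_add_distrib, ← Finset.mul_sum, ← Finset.sum_mul,
            ← Finset.sum_neg_distrib]
  have hdrift : ((n:ℝ)+2) * x ^ (n+1) * (-(∑ r, ν r * w r y)) ≤
      ((n:ℝ)+2) * x ^ (n+1) * (A + α * x) :=
    mul_le_mul_of_nonneg_left (h1 y) (by positivity)
  have hdiff : (∑ r, ν r ^ 2 * w r y) * (K / 2) ≤ Q * K := by
    have h2' := h2 y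
    have : (∑ r, ν r ^ 2 * w r y) ≤ 2 * Q := by
      rw [hQdef]; linarith
    calc (∑ r, ν r ^ 2 * w r y) * (K / 2) ≤ (2 * Q) * (K / 2) :=
          mul_le_mul_of_nonneg_right this (by positivity)
      _ = Q * K := by ring
  have hgoal : ∑ r, w r y * ((x - ν r) ^ (n+2) - x ^ (n+2)) ≤
      ((n:ℝ)+2) * x ^ (n+1) * (A + α * x) + Q * K := le_trans hsum (add_le_add hdrift hdiff)
  have hexp : ((n+2:ℕ):ℤ) - 3 = (n:ℤ) - 1 := by push_cast; ring
  simp only [hsub, show n+2-1 = n+1 from rfl, show n+2-2 = n from rfl]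
  rw [hexp]
  push_cast
  calc ∑ r, w r y * ((x - ν r) ^ (n+2) - x ^ (n+2))
      ≤ ((n:ℝ)+2) * x ^ (n+1) * (A + α * x) + Q * K := hgoal
    _ = ((n:ℝ)+2) * (A + α * x) * x ^ (n+1)
          + (2:ℝ) ^ ((n:ℤ) - 1) * ((n:ℝ)+2) * ((n:ℝ)+2-1) * Q * (x ^ n + δ ^ n) := by
        rw [hKdef]; ring
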